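/- arXiv:1005.5575 — 6 statements merged into one kernel-verified Lean document; each statement's English description precedes it below -/
import Mathlib

section
/- For any essentially bounded measurable function f on X, the essential supremum (with respect to the product measure μ^N restricted to the set C of N-tuples forming (𝓜, μ)-uniform point sets) of the integration error |(1/N)·∑_{n=1}^N f(x_n) − ∫_X f dμ| is at most 2·D(f, L_𝓜), where D(f, L_𝓜) = inf_{l ∈ L_𝓜} ‖f − l‖_∞. -/
open MeasureTheory

private lemma qmc_span_exact
    {X : Type*} [MeasurableSpace X] (μ : Measure X) [IsProbabilityMeasure μ]
    (𝓜 : Set (Set X))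
    (h𝓜 : ∀ M ∈ 𝓜, MeasurableSet M)
    (N : ℕ)
    (C : Set (Fin N → X))
    (hC : C = {x : Fin N → X | ∀ M ∈ 𝓜,
      ∑ n : Fin N, Set.indicator M (fun _ => (1 : ℝ)) (x n) = (μ M).toReal * N})
    (l : X → ℝ)
    (hl : l ∈ Submodule.span ℝ
            (insert (fun _ => (1 : ℝ))
              {g : X → ℝ | ∃ M ∈ 𝓜, g = Set.indicator M (fun _ => (1 : ℝ))})) :
    Integrable l μ ∧ ∀ x ∈ C, ∑ n : Fin N, l (x n) = N * ∫ t, l t ∂μ := by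
  induction hl using Submodule.span_induction with
  | mem g hg =>
    rcases hg with rfl | ⟨M, hM, rfl⟩
    · refine ⟨integrable_const 1, fun x hx => ?_⟩
      simp [measure_univ]
    · refine ⟨(integrable_const (1:ℝ)).indicator (h𝓜 M hM), fun x hx => ?_⟩
      rw [hC] at hx
      rw [hx M hM, integral_indicator_const _ (h𝓜 M hM)]
      simp [mul_comm, Measure.real]
  | zero => exact ⟨integrable_zero _ _ _, by simp⟩
  | add a b _ _ ha hb =>
    refine ⟨ha.1.add hb.1, fun x hx => ?_⟩
    simp only [Pi.add_apply, Finset.sum_add_distrib, ha.2 x hx, hb.2 x hx,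
      integral_add ha.1 hb.1]
    ring
  | smul c a _ ha =>
    refine ⟨ha.1.smul c, fun x hx => ?_⟩
    simp only [Pi.smul_apply, smul_eq_mul, ← Finset.mul_sum, ha.2 x hx, integral_const_mul]
    ring

private lemma qmc_single
    {X : Type*} [MeasurableSpace X] (μ : Measure X) [IsProbabilityMeasure μ]
    (𝓜 : Set (Set X))
    (h𝓜 : ∀ M ∈ 𝓜, MeasurableSet M)
    (N : ℕ) (hN : 0 < N)
    (C : Set (Fin N → X)) (hCm : MeasurableSet C)
    (hC : C = {x : Fin N → X | ∀ M ∈ 𝓜,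
      ∑ n : Fin N, Set.indicator M (fun _ => (1 : ℝ)) (x n) = (μ M).toReal * N})
    (f : X → ℝ) (hf : MemLp f ⊤ μ)
    (l : X → ℝ)
    (hl : l ∈ Submodule.span ℝ
            (insert (fun _ => (1 : ℝ))
              {g : X → ℝ | ∃ M ∈ 𝓜, g = Set.indicator M (fun _ => (1 : ℝ))})) :
    ∀ᵐ x ∂((Measure.pi (fun _ : Fin N => μ)).restrict C),
      ENNReal.ofReal |(1 / (N : ℝ)) * ∑ n : Fin N, f (x n) - ∫ t, f t ∂μ|
        ≤ 2 * eLpNorm (f - l) ⊤ μ := by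
  obtain ⟨hlInt, hlExact⟩ := qmc_span_exact μ 𝓜 h𝓜 N C hC l hl
  set B := eLpNorm (f - l) ⊤ μ with hB
  rcases eq_or_ne B ⊤ with hBtop | hBtop
  · filter_upwards with x
    rw [hBtop]
    simp
  set b := B.toReal with hb
  -- pointwise a.e. bound
  have hae : ∀ᵐ t ∂μ, |f t - l t| ≤ b := by
    have h := ae_le_eLpNormEssSup (f := f - l) (μ := μ)
    filter_upwards [h] with t ht
    have : (‖(f - l) t‖₊ : ENNReal) ≤ B := by rwa [hB, eLpNorm_exponent_top]
    have h2 := ENNReal.toReal_mono hBtop this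
    simpa [Real.norm_eq_abs] using h2
  -- transfer to the product measure
  have haePi : ∀ᵐ x ∂(Measure.pi (fun _ : Fin N => μ)), ∀ n : Fin N,
      |f (x n) - l (x n)| ≤ b := by
    rw [MeasureTheory.ae_all_iff]
    intro n
    exact (Measure.tendsto_eval_ae_ae (μ := fun _ : Fin N => μ)).eventually hae
  have hb0 : 0 ≤ b := ENNReal.toReal_nonneg
  have hint : |∫ t, f t ∂μ - ∫ t, l t ∂μ| ≤ b := by
    rw [← integral_sub (hf.integrable le_top) hlInt]
    have := norm_integral_le_of_norm_le_const (μ := μ) (f := fun t => f t - l t) (C := b)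
      (by filter_upwards [hae] with t ht; simpa [Real.norm_eq_abs] using ht)
    simpa [measure_univ, Real.norm_eq_abs] using this
  filter_upwards [ae_restrict_mem hCm, ae_restrict_of_ae haePi] with x hxC hxb
  have hNne : (N : ℝ) ≠ 0 := Nat.cast_ne_zero.mpr hN.ne'
  have key : (1 / (N : ℝ)) * ∑ n : Fin N, f (x n) - ∫ t, f t ∂μ
      = (1 / (N : ℝ)) * ∑ n : Fin N, (f (x n) - l (x n))
        - (∫ t, f t ∂μ - ∫ t, l t ∂μ) := by
    have hl' := hlExact x hxC
    field_simp [Finset.sum_sub_distrib]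
    ring_nf
    rw [Finset.sum_sub_distrib, hl']
    ring
  have habs : |(1 / (N : ℝ)) * ∑ n : Fin N, f (x n) - ∫ t, f t ∂μ| ≤ 2 * b := by
    rw [key]
    have h1 : |(1 / (N : ℝ)) * ∑ n : Fin N, (f (x n) - l (x n))| ≤ b := by
      rw [abs_mul]
      have hsum : |∑ n : Fin N, (f (x n) - l (x n))| ≤ N * b := by
        calc |∑ n : Fin N, (f (x n) - l (x n))| ≤ ∑ n : Fin N, |f (x n) - l (x n)| :=
              Finset.abs_sum_le_sum_abs _ _
          _ ≤ ∑ _n : Fin N, b := Finset.sum_le_sum fun n _ => hxb n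
          _ = N * b := by simp [Finset.sum_const, mul_comm]
      calc |1 / (N : ℝ)| * |∑ n : Fin N, (f (x n) - l (x n))|
          ≤ |1 / (N : ℝ)| * (N * b) := by
            apply mul_le_mul_of_nonneg_left hsum (abs_nonneg _)
        _ = b := by
            rw [abs_of_nonneg (by positivity : (0:ℝ) ≤ 1 / (N:ℝ))]
            field_simp
    calc |(1 / (N : ℝ)) * ∑ n : Fin N, (f (x n) - l (x n))
          - (∫ t, f t ∂μ - ∫ t, l t ∂μ)|
        ≤ |(1 / (N : ℝ)) * ∑ n : Fin N, (f (x n) - l (x n))|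
          + |∫ t, f t ∂μ - ∫ t, l t ∂μ| := abs_sub _ _
      _ ≤ b + b := add_le_add h1 hint
      _ = 2 * b := by ring
  calc ENNReal.ofReal |(1 / (N : ℝ)) * ∑ n : Fin N, f (x n) - ∫ t, f t ∂μ|
      ≤ ENNReal.ofReal (2 * b) := ENNReal.ofReal_le_ofReal habs
    _ = 2 * ENNReal.ofReal b := by
        rw [ENNReal.ofReal_mul (by norm_num)]; norm_num
    _ = 2 * B := by rw [hb, ENNReal.ofReal_toReal hBtop]

/-- Theorem 1 of the paper: For f ∈ L^∞, the essential supremum over the set C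
of (𝓜, μ)-uniform tuples (w.r.t. the product measure restricted to C) of the integration
error is at most 2 · D(f, L_𝓜), stated as the a.e. bound
|error| ≤ 2 · inf_{l ∈ L_𝓜} ‖f − l‖_∞. -/
theorem quasiMonteCarlo_error_le_two_dist
    {X : Type*} [MeasurableSpace X] (μ : Measure X) [IsProbabilityMeasure μ]
    (𝓜 : Set (Set X)) (h𝓜ne : 𝓜.Nonempty) (h𝓜c : 𝓜.Countable)
    (h𝓜 : ∀ M ∈ 𝓜, MeasurableSet M)
    (N : ℕ) (hN : 0 < N)
    (C : Set (Fin N → X))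
    (hC : C = {x : Fin N → X | ∀ M ∈ 𝓜,
      ∑ n : Fin N, Set.indicator M (fun _ => (1 : ℝ)) (x n) = (μ M).toReal * N})
    (f : X → ℝ) (hf : MemLp f ⊤ μ) :
    ∀ᵐ x ∂((Measure.pi (fun _ : Fin N => μ)).restrict C),
      ENNReal.ofReal |(1 / (N : ℝ)) * ∑ n : Fin N, f (x n) - ∫ t, f t ∂μ|
        ≤ 2 * ⨅ l ∈ Submodule.span ℝ
            (insert (fun _ => (1 : ℝ))
              {g : X → ℝ | ∃ M ∈ 𝓜, g = Set.indicator M (fun _ => (1 : ℝ))}),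
            eLpNorm (f - l) ⊤ μ := by
  -- C is measurable
  have hCm : MeasurableSet C := by
    rw [hC]
    have : {x : Fin N → X | ∀ M ∈ 𝓜,
        ∑ n : Fin N, Set.indicator M (fun _ => (1 : ℝ)) (x n) = (μ M).toReal * N}
        = ⋂ M ∈ 𝓜, {x : Fin N → X |
            ∑ n : Fin N, Set.indicator M (fun _ => (1 : ℝ)) (x n) = (μ M).toReal * N} := by
      ext x; simp
    rw [this]
    refine MeasurableSet.biInter h𝓜c fun M hM => ?_
    have hmeas : Measurable fun x : Fin N → X =>
        ∑ n : Fin N, Set.indicator M (fun _ => (1 : ℝ)) (x n) :=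
      Finset.measurable_sum _ fun n _ =>
        (measurable_const.indicator (h𝓜 M hM)).comp (measurable_pi_apply n)
    exact hmeas (measurableSet_singleton _)
  set S := Submodule.span ℝ
      (insert (fun _ => (1 : ℝ))
        {g : X → ℝ | ∃ M ∈ 𝓜, g = Set.indicator M (fun _ => (1 : ℝ))}) with hS
  set I := ⨅ l ∈ S, eLpNorm (f - l) ⊤ μ with hI
  have hIne : I ≠ ⊤ := by
    have h0 : (0 : X → ℝ) ∈ S := Submodule.zero_mem S
    have : I ≤ eLpNorm (f - 0) ⊤ μ := biInf_le _ h0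
    rw [sub_zero] at this
    exact this.trans_lt hf.2 |>.ne
  -- for every k, choose an almost optimal l
  have hk : ∀ k : ℕ, ∀ᵐ x ∂((Measure.pi (fun _ : Fin N => μ)).restrict C),
      ENNReal.ofReal |(1 / (N : ℝ)) * ∑ n : Fin N, f (x n) - ∫ t, f t ∂μ|
        ≤ 2 * (I + ((k : ENNReal))⁻¹) := by
    intro k
    have hkpos : (0 : ENNReal) < ((k : ENNReal))⁻¹ :=
      ENNReal.inv_pos.mpr (ENNReal.natCast_ne_top k)
    have : I < I + ((k : ENNReal))⁻¹ := ENNReal.lt_add_right hIne hkpos.ne'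
    rw [hI] at this
    obtain ⟨l, hl'⟩ := iInf_lt_iff.mp this
    obtain ⟨hlS, hlB⟩ := iInf_lt_iff.mp hl'
    filter_upwards [qmc_single μ 𝓜 h𝓜 N hN C hCm hC f hf l hlS] with x hx
    exact hx.trans (mul_le_mul_right hlB.le 2)
  rw [← MeasureTheory.ae_all_iff] at hk
  filter_upwards [hk] with x hx
  refine ENNReal.le_of_forall_pos_le_add fun ε hε h2I => ?_
  obtain ⟨k, hkε⟩ := ENNReal.exists_inv_nat_lt
    (a := (ε : ENNReal) / 2) (by simpa using hε.ne')
  calc ENNReal.ofReal |(1 / (N : ℝ)) * ∑ n : Fin N, f (x n) - ∫ t, f t ∂μ|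
      ≤ 2 * (I + ((k : ENNReal))⁻¹) := hx k
    _ = 2 * I + 2 * ((k : ENNReal))⁻¹ := by ring
    _ ≤ 2 * I + 2 * ((ε : ENNReal) / 2) := by
        gcongr
    _ ≤ 2 * I + ε := by
        rw [ENNReal.mul_div_cancel' (by norm_num) (by norm_num)]
end

section
/- Let f be essentially bounded and measurable on X, and for each j let C_j = (G_j(f) + g_j(f))/2 and l = ∑_{j=1}^k C_j·χ_{M_j}. Then ‖f − l‖_∞ ≤ (1/2)·max_{1≤j≤k}(G_j(f) − g_j(f)), and hence D(f, L_𝓜) ≤ (1/2)·S_𝓜(f). -/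
open MeasureTheory

/-- `Gj μ f M` is the essential upper bound `G_j(f)` of `f` on `M`:
`-inf_{x∈M} f⁻` if `f⁺ = 0` μ-a.e. on `M`, and `esssup_{M} f⁺` otherwise. -/
noncomputable def Gj {X : Type*} [MeasurableSpace X] (μ : Measure X)
    (f : X → ℝ) (M : Set X) : ℝ :=
  if μ {x | x ∈ M ∧ 0 < max (f x) 0} = 0 then
    -(sInf ((fun x => max (-(f x)) 0) '' M))
  else essSup (fun x => max (f x) 0) (μ.restrict M)

/-- `gj μ f M` is the essential lower bound `g_j(f)` of `f` on `M`:
`inf_{x∈M} f⁺` if `f⁻ = 0` μ-a.e. on `M`, and `-esssup_{M} f⁻` otherwise. -/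
noncomputable def gj {X : Type*} [MeasurableSpace X] (μ : Measure X)
    (f : X → ℝ) (M : Set X) : ℝ :=
  if μ {x | x ∈ M ∧ 0 < max (-(f x)) 0} = 0 then
    sInf ((fun x => max (f x) 0) '' M)
  else -(essSup (fun x => max (-(f x)) 0) (μ.restrict M))

set_option maxHeartbeats 1000000 in
/-- With `C_j = (G_j(f)+g_j(f))/2` and `l = ∑_j C_j χ_{M_j}`, one has
`‖f − l‖_∞ ≤ (1/2)·max_j (G_j(f) − g_j(f))`, hence `D(f, L_𝓜) ≤ (1/2)·S_𝓜(f)`. -/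
theorem dist_le_half_spread
    {X : Type*} [MeasurableSpace X] (μ : Measure X) [IsProbabilityMeasure μ]
    (k : ℕ) (hk : 0 < k) (M : Fin k → Set X)
    (hMmeas : ∀ j, MeasurableSet (M j))
    (hMdisj : Pairwise (Function.onFun Disjoint M))
    (hMcover : ⋃ j, M j = Set.univ)
    (f : X → ℝ) (hf : MemLp f ⊤ μ)
    (l : X → ℝ)
    (hl : l = fun x => ∑ j : Fin k,
      ((Gj μ f (M j) + gj μ f (M j)) / 2) *
        Set.indicator (M j) (fun _ => (1 : ℝ)) x) :
    eLpNorm (f - l) ⊤ μ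
        ≤ ENNReal.ofReal ((1 / 2) * ⨆ j : Fin k, (Gj μ f (M j) - gj μ f (M j)))
    ∧ (⨅ l' ∈ Submodule.span ℝ
          (insert (fun _ => (1 : ℝ))
            {g : X → ℝ | ∃ j : Fin k, g = Set.indicator (M j) (fun _ => (1 : ℝ))}),
        eLpNorm (f - l') ⊤ μ)
        ≤ ENNReal.ofReal ((1 / 2) * ⨆ j : Fin k, (Gj μ f (M j) - gj μ f (M j))) := by

  classical
  -- global essential bound on f
  have hC : ∀ᵐ x ∂μ, ‖f x‖ ≤ (eLpNormEssSup f μ).toReal := by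
    have h1 := enorm_ae_le_eLpNormEssSup f μ
    have h2 : eLpNormEssSup f μ < ⊤ := by
      simpa [eLpNorm_exponent_top] using hf.2
    filter_upwards [h1] with x hx
    have := (ENNReal.toReal_le_toReal (by simp) h2.ne).2 hx
    simpa using this
  have hC0 : (0:ℝ) ≤ (eLpNormEssSup f μ).toReal := ENNReal.toReal_nonneg
  -- key pointwise a.e. bound on each piece
  have key : ∀ j : Fin k, ∀ᵐ x ∂μ, x ∈ M j →
      gj μ f (M j) ≤ f x ∧ f x ≤ Gj μ f (M j) := by
    intro j
    have hup : ∀ᵐ x ∂μ, x ∈ M j → f x ≤ Gj μ f (M j) := by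
      rw [Gj]
      split_ifs with h
      · have h0 : ∀ᵐ x ∂μ, ¬ (x ∈ M j ∧ 0 < max (f x) 0) := by
          rw [ae_iff]
          simpa using h
        filter_upwards [h0] with x hx hxM
        have hfx : f x ≤ 0 := by
          by_contra hpos
          push_neg at hpos
          exact hx ⟨hxM, lt_max_of_lt_left hpos⟩
        have hbdd : BddBelow ((fun x => max (-(f x)) 0) '' (M j)) := by
          refine ⟨0, ?_⟩
          rintro y ⟨z, _, rfl⟩
          exact le_max_right _ _
        have hmem : max (-(f x)) 0 ∈ (fun x => max (-(f x)) 0) '' (M j) :=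
          ⟨x, hxM, rfl⟩
        have h3 := csInf_le hbdd hmem
        have h4 : max (-(f x)) 0 = -(f x) := max_eq_left (by linarith)
        rw [h4] at h3
        linarith
      · have hb : Filter.IsBoundedUnder (· ≤ ·) (ae (μ.restrict (M j)))
            (fun x => max (f x) 0) := by
          apply Filter.isBoundedUnder_of_eventually_le (a := (eLpNormEssSup f μ).toReal)
          have h5 := ae_restrict_of_ae (s := M j) hC
          filter_upwards [h5] with x hx
          exact max_le (le_trans (le_abs_self _) hx) hC0
        have h6 := ae_le_essSup (μ := μ.restrict (M j))
          (f := fun x => max (f x) 0) hb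
        rw [ae_restrict_iff' (hMmeas j)] at h6
        filter_upwards [h6] with x hx hxM
        exact le_trans (le_max_left _ _) (hx hxM)
    have hlow : ∀ᵐ x ∂μ, x ∈ M j → gj μ f (M j) ≤ f x := by
      rw [gj]
      split_ifs with h
      · have h0 : ∀ᵐ x ∂μ, ¬ (x ∈ M j ∧ 0 < max (-(f x)) 0) := by
          rw [ae_iff]
          simpa using h
        filter_upwards [h0] with x hx hxM
        have hfx : 0 ≤ f x := by
          by_contra hpos
          push_neg at hpos
          exact hx ⟨hxM, lt_max_of_lt_left (by linarith)⟩
        have hbdd : BddBelow ((fun x => max (f x) 0) '' (M j)) := by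
          refine ⟨0, ?_⟩
          rintro y ⟨z, _, rfl⟩
          exact le_max_right _ _
        have hmem : max (f x) 0 ∈ (fun x => max (f x) 0) '' (M j) :=
          ⟨x, hxM, rfl⟩
        have h3 := csInf_le hbdd hmem
        have h4 : max (f x) 0 = f x := max_eq_left hfx
        rw [h4] at h3
        linarith
      · have hb : Filter.IsBoundedUnder (· ≤ ·) (ae (μ.restrict (M j)))
            (fun x => max (-(f x)) 0) := by
          apply Filter.isBoundedUnder_of_eventually_le (a := (eLpNormEssSup f μ).toReal)
          have h5 := ae_restrict_of_ae (s := M j) hC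
          filter_upwards [h5] with x hx
          exact max_le (le_trans (neg_le_abs _) hx) hC0
        have h6 := ae_le_essSup (μ := μ.restrict (M j))
          (f := fun x => max (-(f x)) 0) hb
        rw [ae_restrict_iff' (hMmeas j)] at h6
        filter_upwards [h6] with x hx hxM
        have := hx hxM
        have h7 : -(f x) ≤ max (-(f x)) 0 := le_max_left _ _
        linarith
    filter_upwards [hup, hlow] with x h1 h2 hxM
    exact ⟨h2 hxM, h1 hxM⟩
  set B : ℝ := (1 / 2) * ⨆ j : Fin k, (Gj μ f (M j) - gj μ f (M j)) with hBdef
  have main : ∀ᵐ x ∂μ, ‖(f - l) x‖ ≤ B := by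
    have hall := (ae_all_iff).2 key
    filter_upwards [hall] with x hx
    obtain ⟨j, hj⟩ : ∃ j, x ∈ M j := by
      have hx' : x ∈ ⋃ j, M j := hMcover ▸ Set.mem_univ x
      simpa using hx'
    have hlx : l x = (Gj μ f (M j) + gj μ f (M j)) / 2 := by
      simp only [hl]
      rw [Finset.sum_eq_single j]
      · simp [Set.indicator_of_mem hj]
      · intro b _ hb
        have hxb : x ∉ M b := fun hxb => Set.disjoint_left.mp (hMdisj hb) hxb hj
        simp [Set.indicator_of_notMem hxb]
      · simp
    obtain ⟨h1, h2⟩ := hx j hj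
    have hle : Gj μ f (M j) - gj μ f (M j)
        ≤ ⨆ j : Fin k, (Gj μ f (M j) - gj μ f (M j)) :=
      le_ciSup (f := fun j => Gj μ f (M j) - gj μ f (M j))
        (Set.Finite.bddAbove (Set.finite_range _)) j
    simp only [Pi.sub_apply, hlx, Real.norm_eq_abs]
    rw [abs_le]
    constructor <;> [skip; skip] <;> rw [hBdef] <;> linarith
  have hA : eLpNorm (f - l) ⊤ μ ≤ ENNReal.ofReal B := by
    rw [eLpNorm_exponent_top]
    exact eLpNormEssSup_le_of_ae_bound main
  refine ⟨hA, ?_⟩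
  have hmem : l ∈ Submodule.span ℝ
      (insert (fun _ => (1 : ℝ))
        {g : X → ℝ | ∃ j : Fin k, g = Set.indicator (M j) (fun _ => (1 : ℝ))}) := by
    rw [hl]
    have heq : (fun x => ∑ j : Fin k,
        ((Gj μ f (M j) + gj μ f (M j)) / 2) *
          Set.indicator (M j) (fun _ => (1 : ℝ)) x)
        = ∑ j : Fin k, ((Gj μ f (M j) + gj μ f (M j)) / 2) •
            Set.indicator (M j) (fun _ => (1 : ℝ)) := by
      funext x
      simp [Finset.sum_apply]
    rw [heq]
    exact Submodule.sum_mem _ fun j _ => Submodule.smul_mem _ _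
      (Submodule.subset_span (Set.mem_insert_iff.2 (Or.inr ⟨j, rfl⟩)))
  exact le_trans (iInf₂_le l hmem) hA
end

section
/- For any essentially bounded measurable f on X, the essential supremum over the set C of (𝓜, μ)-uniform N-tuples of |(1/N)·∑_{n=1}^N f(x_n) − ∫_X f dμ| is at most S_𝓜(f) = max_{1≤j≤k}(G_j(f) − g_j(f)). -/
open MeasureTheory
open Filter

lemma ae_le_Gj {X : Type*} [MeasurableSpace X] (μ : Measure X)
    (f : X → ℝ) (M : Set X) (hM : MeasurableSet M) (Cb : ℝ)
    (hCb : ∀ᵐ x ∂μ, |f x| ≤ Cb) :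
    ∀ᵐ x ∂μ, x ∈ M → f x ≤ Gj μ f M := by
  unfold Gj
  split_ifs with h
  · have h' : ∀ᵐ x ∂μ, ¬(x ∈ M ∧ 0 < max (f x) 0) := (measure_eq_zero_iff_ae_notMem ..).mp h
    filter_upwards [h'] with x hx hxM
    have hf0 : f x ≤ 0 := by
      by_contra hpos
      exact hx ⟨hxM, by simp [le_max_iff]; linarith⟩
    have hbdd : BddBelow ((fun x => max (-(f x)) 0) '' M) := by
      refine ⟨0, ?_⟩
      rintro y ⟨z, -, rfl⟩
      exact le_max_right _ _
    have h1 : sInf ((fun x => max (-(f x)) 0) '' M) ≤ max (-(f x)) 0 :=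
      csInf_le hbdd (Set.mem_image_of_mem _ hxM)
    have h2 : max (-(f x)) 0 = -(f x) := max_eq_left (by linarith)
    rw [h2] at h1
    linarith
  · rw [← ae_restrict_iff' hM]
    have hb : IsBoundedUnder (· ≤ ·) (ae (μ.restrict M)) (fun x => max (f x) 0) := by
      refine ⟨max Cb 0, ?_⟩
      rw [eventually_map]
      filter_upwards [ae_restrict_of_ae hCb] with x hx
      exact max_le_max (le_trans (le_abs_self _) hx) le_rfl
    filter_upwards [eventually_le_limsup hb] with x hx
    exact le_trans (le_max_left _ _) hx

lemma Gj_neg {X : Type*} [MeasurableSpace X] (μ : Measure X)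
    (f : X → ℝ) (M : Set X) :
    Gj μ (fun x => -(f x)) M = -(gj μ f M) := by
  unfold Gj gj
  simp only [neg_neg]
  split_ifs with h
  · rfl
  · rw [neg_neg]

lemma ae_ge_gj {X : Type*} [MeasurableSpace X] (μ : Measure X)
    (f : X → ℝ) (M : Set X) (hM : MeasurableSet M) (Cb : ℝ)
    (hCb : ∀ᵐ x ∂μ, |f x| ≤ Cb) :
    ∀ᵐ x ∂μ, x ∈ M → gj μ f M ≤ f x := by
  have := ae_le_Gj μ (fun x => -(f x)) M hM Cb
    (by filter_upwards [hCb] with x hx; simpa using hx)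
  rw [Gj_neg] at this
  filter_upwards [this] with x hx hxM
  have := hx hxM
  linarith

/-- Corollary 1 of the paper: For f ∈ L^∞, the essential supremum over the set
C of (𝓜, μ)-uniform tuples of the integration error is at most
S_𝓜(f) = max_j (G_j(f) − g_j(f)), stated as an a.e. bound. -/
theorem quasiMonteCarlo_error_le_spread
    {X : Type*} [MeasurableSpace X] (μ : Measure X) [IsProbabilityMeasure μ]
    (k : ℕ) (hk : 0 < k) (M : Fin k → Set X)
    (hMmeas : ∀ j, MeasurableSet (M j))
    (hMdisj : Pairwise (Function.onFun Disjoint M))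
    (hMcover : ⋃ j, M j = Set.univ)
    (N : ℕ) (hN : 0 < N)
    (C : Set (Fin N → X))
    (hC : C = {x : Fin N → X | ∀ j : Fin k,
      ∑ n : Fin N, Set.indicator (M j) (fun _ => (1 : ℝ)) (x n) = (μ (M j)).toReal * N})
    (f : X → ℝ) (hf : MemLp f ⊤ μ) :
    ∀ᵐ x ∂((Measure.pi (fun _ : Fin N => μ)).restrict C),
      |(1 / (N : ℝ)) * ∑ n : Fin N, f (x n) - ∫ t, f t ∂μ|
        ≤ ⨆ j : Fin k, (Gj μ f (M j) - gj μ f (M j)) := by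
  classical
  have hNe : Nonempty (Fin k) := ⟨⟨0, hk⟩⟩
  set ν := Measure.pi (fun _ : Fin N => μ) with hν
  -- essential bound for f
  obtain ⟨Cb, hCb⟩ : ∃ Cb : ℝ, ∀ᵐ x ∂μ, |f x| ≤ Cb := by
    refine ⟨(eLpNormEssSup f μ).toReal, ?_⟩
    have h2 : eLpNormEssSup f μ ≠ ⊤ := by
      have := hf.2; rw [eLpNorm_exponent_top] at this; exact this.ne
    filter_upwards [enorm_ae_le_eLpNormEssSup f μ] with x hx
    rw [← Real.norm_eq_abs]
    have := ENNReal.toReal_mono h2 hx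
    simpa using this
  have hfint : Integrable f μ := hf.integrable le_top
  -- a.e. each coordinate is well-behaved
  have hgood : ∀ᵐ x ∂ν, ∀ n : Fin N, ∀ j : Fin k,
      x n ∈ M j → gj μ f (M j) ≤ f (x n) ∧ f (x n) ≤ Gj μ f (M j) := by
    rw [ae_all_iff]
    intro n
    rw [ae_all_iff]
    intro j
    have hμ : ∀ᵐ y ∂μ, y ∈ M j → gj μ f (M j) ≤ f y ∧ f y ≤ Gj μ f (M j) := by
      filter_upwards [ae_ge_gj μ f (M j) (hMmeas j) Cb hCb,
        ae_le_Gj μ f (M j) (hMmeas j) Cb hCb] with y h1 h2 hy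
      exact ⟨h1 hy, h2 hy⟩
    rw [ae_iff] at hμ ⊢
    exact Measure.pi_eval_preimage_null (μ := fun _ : Fin N => μ) (i := n) hμ
  -- C measurable
  have hCmeas : MeasurableSet C := by
    rw [hC, Set.setOf_forall]
    refine MeasurableSet.iInter fun j => ?_
    have hmeas : Measurable fun x : Fin N → X =>
        ∑ n : Fin N, Set.indicator (M j) (fun _ => (1 : ℝ)) (x n) :=
      Finset.measurable_sum _ fun n _ =>
        (measurable_const.indicator (hMmeas j)).comp (measurable_pi_apply n)
    exact measurableSet_eq_fun hmeas measurable_const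
  have hw1 : ∑ j, (μ (M j)).toReal = 1 := by
    have h := measure_iUnion (μ := μ) hMdisj hMmeas
    rw [hMcover, measure_univ, tsum_fintype] at h
    have h2 := congrArg ENNReal.toReal h
    rw [ENNReal.toReal_sum (fun j _ => measure_ne_top μ _)] at h2
    simpa using h2.symm
  -- partition: unique piece for each point
  have hpart : ∀ y : X, ∃ j, y ∈ M j ∧ ∀ j', y ∈ M j' → j' = j := by
    intro y
    have : y ∈ ⋃ j, M j := hMcover ▸ Set.mem_univ y
    obtain ⟨j, hj⟩ := Set.mem_iUnion.mp this
    refine ⟨j, hj, fun j' hj' => ?_⟩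
    by_contra hne
    exact Set.disjoint_left.mp (hMdisj hne) hj' hj
  -- integral split
  have hint_split : ∫ t, f t ∂μ = ∑ j, ∫ t in M j, f t ∂μ := by
    have h := integral_iUnion hMmeas hMdisj (hfint.integrableOn : IntegrableOn f (⋃ j, M j) μ)
    rw [hMcover, setIntegral_univ, tsum_fintype] at h
    exact h
  have hint_le : ∀ j, ∫ t in M j, f t ∂μ ≤ Gj μ f (M j) * (μ (M j)).toReal := by
    intro j
    have hae : ∀ᵐ t ∂μ.restrict (M j), f t ≤ Gj μ f (M j) :=
      (ae_restrict_iff' (hMmeas j)).mpr (ae_le_Gj μ f (M j) (hMmeas j) Cb hCb)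
    calc ∫ t in M j, f t ∂μ ≤ ∫ _ in M j, Gj μ f (M j) ∂μ :=
          integral_mono_ae hfint.integrableOn (integrable_const _) hae
      _ = Gj μ f (M j) * (μ (M j)).toReal := by
          rw [setIntegral_const, smul_eq_mul, mul_comm, measureReal_def]
  have hint_ge : ∀ j, gj μ f (M j) * (μ (M j)).toReal ≤ ∫ t in M j, f t ∂μ := by
    intro j
    have hae : ∀ᵐ t ∂μ.restrict (M j), gj μ f (M j) ≤ f t :=
      (ae_restrict_iff' (hMmeas j)).mpr (ae_ge_gj μ f (M j) (hMmeas j) Cb hCb)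
    calc gj μ f (M j) * (μ (M j)).toReal = ∫ _ in M j, gj μ f (M j) ∂μ := by
          rw [setIntegral_const, smul_eq_mul, mul_comm, measureReal_def]
      _ ≤ ∫ t in M j, f t ∂μ :=
          integral_mono_ae (integrable_const _) hfint.integrableOn hae
  -- now the pointwise argument on the good set
  filter_upwards [ae_restrict_mem hCmeas, ae_restrict_of_ae hgood] with x hxC hxg
  rw [hC] at hxC
  have key : ∀ n : Fin N,
      (∑ j, Set.indicator (M j) (fun _ => (1 : ℝ)) (x n) * gj μ f (M j)) ≤ f (x n) ∧
      f (x n) ≤ ∑ j, Set.indicator (M j) (fun _ => (1 : ℝ)) (x n) * Gj μ f (M j) := by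
    intro n
    obtain ⟨j0, hj0, huniq⟩ := hpart (x n)
    have hone : ∀ c : Fin k → ℝ,
        ∑ j, Set.indicator (M j) (fun _ => (1 : ℝ)) (x n) * c j = c j0 := by
      intro c
      rw [Finset.sum_eq_single_of_mem j0 (Finset.mem_univ _)
        (fun j _ hne => by
          rw [Set.indicator_of_notMem (fun hmem => hne (huniq j hmem)), zero_mul]),
        Set.indicator_of_mem hj0, one_mul]
    rw [hone, hone]
    exact ⟨(hxg n j0 hj0).1, (hxg n j0 hj0).2⟩
  have hNpos : (0 : ℝ) < N := by exact_mod_cast hN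
  have hswap : ∀ c : Fin k → ℝ,
      ∑ n : Fin N, ∑ j, Set.indicator (M j) (fun _ => (1 : ℝ)) (x n) * c j
        = ∑ j, c j * ((μ (M j)).toReal * N) := by
    intro c
    rw [Finset.sum_comm]
    refine Finset.sum_congr rfl fun j _ => ?_
    rw [← Finset.sum_mul, hxC j, mul_comm]
  have hA_le : (1 / (N : ℝ)) * ∑ n : Fin N, f (x n)
      ≤ ∑ j, Gj μ f (M j) * (μ (M j)).toReal := by
    have h1 : ∑ n : Fin N, f (x n)
        ≤ ∑ j, Gj μ f (M j) * ((μ (M j)).toReal * N) := by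
      calc ∑ n : Fin N, f (x n)
          ≤ ∑ n : Fin N, ∑ j, Set.indicator (M j) (fun _ => (1 : ℝ)) (x n) * Gj μ f (M j) :=
            Finset.sum_le_sum fun n _ => (key n).2
        _ = ∑ j, Gj μ f (M j) * ((μ (M j)).toReal * N) := hswap _
    calc (1 / (N : ℝ)) * ∑ n : Fin N, f (x n)
        ≤ (1 / (N : ℝ)) * ∑ j, Gj μ f (M j) * ((μ (M j)).toReal * N) := by
          apply mul_le_mul_of_nonneg_left h1 (by positivity)
      _ = ∑ j, Gj μ f (M j) * (μ (M j)).toReal := by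
          rw [Finset.mul_sum]
          refine Finset.sum_congr rfl fun j _ => ?_
          field_simp
  have hA_ge : ∑ j, gj μ f (M j) * (μ (M j)).toReal
      ≤ (1 / (N : ℝ)) * ∑ n : Fin N, f (x n) := by
    have h1 : ∑ j, gj μ f (M j) * ((μ (M j)).toReal * N) ≤ ∑ n : Fin N, f (x n) := by
      calc ∑ j, gj μ f (M j) * ((μ (M j)).toReal * N)
          = ∑ n : Fin N, ∑ j, Set.indicator (M j) (fun _ => (1 : ℝ)) (x n) * gj μ f (M j) :=
            (hswap _).symm
        _ ≤ ∑ n : Fin N, f (x n) := Finset.sum_le_sum fun n _ => (key n).1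
    calc ∑ j, gj μ f (M j) * (μ (M j)).toReal
        = (1 / (N : ℝ)) * ∑ j, gj μ f (M j) * ((μ (M j)).toReal * N) := by
          rw [Finset.mul_sum]
          refine Finset.sum_congr rfl fun j _ => ?_
          field_simp
      _ ≤ (1 / (N : ℝ)) * ∑ n : Fin N, f (x n) :=
          mul_le_mul_of_nonneg_left h1 (by positivity)
  have hI_le : ∫ t, f t ∂μ ≤ ∑ j, Gj μ f (M j) * (μ (M j)).toReal := by
    rw [hint_split]; exact Finset.sum_le_sum fun j _ => hint_le j
  have hI_ge : ∑ j, gj μ f (M j) * (μ (M j)).toReal ≤ ∫ t, f t ∂μ := by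
    rw [hint_split]; exact Finset.sum_le_sum fun j _ => hint_ge j
  have hS : ∀ j, Gj μ f (M j) - gj μ f (M j)
      ≤ ⨆ j : Fin k, (Gj μ f (M j) - gj μ f (M j)) := fun j =>
    le_ciSup (f := fun j : Fin k => Gj μ f (M j) - gj μ f (M j))
      (Set.Finite.bddAbove (Set.finite_range _)) j
  have hspread : ∑ j, (Gj μ f (M j) - gj μ f (M j)) * (μ (M j)).toReal
      ≤ ⨆ j : Fin k, (Gj μ f (M j) - gj μ f (M j)) := by
    calc ∑ j, (Gj μ f (M j) - gj μ f (M j)) * (μ (M j)).toReal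
        ≤ ∑ j, (⨆ j : Fin k, (Gj μ f (M j) - gj μ f (M j))) * (μ (M j)).toReal :=
          Finset.sum_le_sum fun j _ =>
            mul_le_mul_of_nonneg_right (hS j) ENNReal.toReal_nonneg
      _ = (⨆ j : Fin k, (Gj μ f (M j) - gj μ f (M j))) * ∑ j, (μ (M j)).toReal :=
          (Finset.mul_sum _ _ _).symm
      _ = ⨆ j : Fin k, (Gj μ f (M j) - gj μ f (M j)) := by rw [hw1, mul_one]
  have hdiff : ∑ j, (Gj μ f (M j) - gj μ f (M j)) * (μ (M j)).toReal
      = ∑ j, Gj μ f (M j) * (μ (M j)).toReal - ∑ j, gj μ f (M j) * (μ (M j)).toReal := by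
    rw [← Finset.sum_sub_distrib]
    exact Finset.sum_congr rfl fun j _ => by ring
  rw [abs_sub_le_iff]
  constructor <;> linarith
end

section
/- Let f be essentially bounded measurable and M_j ∈ 𝒜. The set of (𝓜, μ)-uniform tuples (x_1,...,x_N) ∈ C for which μ(M_j)·g_j(f) > (1/N)·∑_{n : x_n ∈ M_j} f(x_n) is a null set with respect to the product measure μ^N; similarly for the set where μ(M_j)·G_j(f) < (1/N)·∑_{n : x_n ∈ M_j} f(x_n). -/
open MeasureTheory

private lemma helper_lower {X : Type*} [MeasurableSpace X] (μ : Measure X)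
    [IsProbabilityMeasure μ] {N : ℕ} (hN : 0 < N) {Mj : Set X} {C : Set (Fin N → X)}
    (hC : ∀ x ∈ C, ∑ n : Fin N, Set.indicator Mj (fun _ => (1 : ℝ)) (x n) = (μ Mj).toReal * N)
    {f : X → ℝ} {g0 : ℝ} {B : Set X} (hB : μ B = 0)
    (hpt : ∀ x ∈ Mj, x ∉ B → g0 ≤ f x) :
    Measure.pi (fun _ : Fin N => μ)
      {x ∈ C | (μ Mj).toReal * g0 > (1 / (N : ℝ)) * ∑ n : Fin N, Set.indicator Mj f (x n)} = 0 := by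
  refine measure_mono_null ?_
    (measure_iUnion_null fun n : Fin N =>
      Measure.pi_eval_preimage_null (fun _ : Fin N => μ) (i := n) hB)
  intro x hx
  by_contra hx'
  simp only [Set.mem_iUnion, Set.mem_preimage] at hx'
  push_neg at hx'
  obtain ⟨hxC, hlt⟩ := hx
  have hterm : ∀ n : Fin N,
      g0 * Set.indicator Mj (fun _ => (1 : ℝ)) (x n) ≤ Set.indicator Mj f (x n) := by
    intro n
    by_cases h : x n ∈ Mj
    · simp only [Set.indicator_of_mem h, mul_one]
      exact hpt _ h (hx' n)
    · simp [Set.indicator_of_notMem h]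
  have hsum : g0 * ((μ Mj).toReal * N) ≤ ∑ n : Fin N, Set.indicator Mj f (x n) := by
    rw [← hC x hxC, Finset.mul_sum]
    exact Finset.sum_le_sum fun n _ => hterm n
  have hNpos : (0 : ℝ) < N := by exact_mod_cast hN
  have h2 : (1 / (N : ℝ)) * (g0 * ((μ Mj).toReal * N)) ≤
      (1 / (N : ℝ)) * ∑ n : Fin N, Set.indicator Mj f (x n) :=
    mul_le_mul_of_nonneg_left hsum (by positivity)
  have h3 : (1 / (N : ℝ)) * (g0 * ((μ Mj).toReal * N)) = (μ Mj).toReal * g0 := by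
    field_simp
  rw [h3] at h2
  exact absurd h2 (not_le.mpr hlt)

private lemma ae_norm_bound {X : Type*} [MeasurableSpace X] {μ : Measure X}
    {f : X → ℝ} (hf : MemLp f ⊤ μ) : ∃ c : ℝ, ∀ᵐ x ∂μ, ‖f x‖ ≤ c := by
  have h1 := hf.2
  rw [eLpNorm_exponent_top] at h1
  refine ⟨(eLpNormEssSup f μ).toReal, ?_⟩
  filter_upwards [ae_le_eLpNormEssSup (f := f) (μ := μ)] with x hx
  have h2 := ENNReal.toReal_mono h1.ne hx
  simpa using h2

set_option maxHeartbeats 1000000 in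
/-- Within the set C of (𝓜, μ)-uniform tuples, the set where
μ(M_j)·g_j(f) exceeds the partial average over points in M_j is μ^N-null, and similarly
for the set where the partial average exceeds μ(M_j)·G_j(f). -/
theorem partial_avg_outside_bounds_null
    {X : Type*} [MeasurableSpace X] (μ : Measure X) [IsProbabilityMeasure μ]
    (k : ℕ) (hk : 0 < k) (M : Fin k → Set X)
    (hMmeas : ∀ j, MeasurableSet (M j))
    (hMdisj : Pairwise (Function.onFun Disjoint M))
    (hMcover : ⋃ j, M j = Set.univ)
    (N : ℕ) (hN : 0 < N)
    (C : Set (Fin N → X))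
    (hC : C = {x : Fin N → X | ∀ j : Fin k,
      ∑ n : Fin N, Set.indicator (M j) (fun _ => (1 : ℝ)) (x n) = (μ (M j)).toReal * N})
    (f : X → ℝ) (hf : MemLp f ⊤ μ) (j : Fin k) :
    Measure.pi (fun _ : Fin N => μ)
      {x ∈ C | (μ (M j)).toReal * gj μ f (M j)
        > (1 / (N : ℝ)) * ∑ n : Fin N, Set.indicator (M j) f (x n)} = 0 ∧
    Measure.pi (fun _ : Fin N => μ)
      {x ∈ C | (μ (M j)).toReal * Gj μ f (M j)
        < (1 / (N : ℝ)) * ∑ n : Fin N, Set.indicator (M j) f (x n)} = 0 := by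
  have hC' : ∀ x ∈ C, ∑ n : Fin N, Set.indicator (M j) (fun _ => (1 : ℝ)) (x n)
      = (μ (M j)).toReal * N := by
    intro x hx; rw [hC] at hx; exact hx j
  obtain ⟨c, hc⟩ := ae_norm_bound hf
  constructor
  · -- lower bound part
    have hlow : ∃ B : Set X, μ B = 0 ∧ ∀ x ∈ M j, x ∉ B → gj μ f (M j) ≤ f x := by
      by_cases h : μ {x | x ∈ M j ∧ 0 < max (-(f x)) 0} = 0
      · refine ⟨{x | x ∈ M j ∧ 0 < max (-(f x)) 0}, h, fun x hx hxB => ?_⟩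
        have h0 : ¬ (0 < max (-(f x)) 0) := fun hlt => hxB ⟨hx, hlt⟩
        have hfx : 0 ≤ f x := by
          rcases le_or_gt 0 (f x) with h' | h'
          · exact h'
          · exact absurd (lt_max_of_lt_left (by linarith)) h0
        have : sInf ((fun x => max (f x) 0) '' (M j)) ≤ max (f x) 0 :=
          csInf_le ⟨0, fun y ⟨z, _, hz⟩ => hz ▸ le_max_right _ _⟩ ⟨x, hx, rfl⟩
        rw [gj, if_pos h]
        calc sInf ((fun x => max (f x) 0) '' (M j)) ≤ max (f x) 0 := this
          _ = f x := max_eq_left hfx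
      · set s := essSup (fun x => max (-(f x)) 0) (μ.restrict (M j)) with hs
        have hbdd : Filter.IsBoundedUnder (· ≤ ·) (ae (μ.restrict (M j)))
            (fun x => max (-(f x)) 0) := by
          apply Filter.isBoundedUnder_of_eventually_le (a := |c|)
          have h2 : ∀ᵐ x ∂(μ.restrict (M j)), ‖f x‖ ≤ c :=
            hc.filter_mono ae_restrict_le
          filter_upwards [h2] with x hx
          have h3 : -(f x) ≤ |c| := le_trans (neg_le_abs _) (le_trans hx (le_abs_self c))
          exact max_le h3 (abs_nonneg c)
        have hae := ae_le_essSup (μ := μ.restrict (M j)) (f := fun x => max (-(f x)) 0) hbdd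
        rw [ae_restrict_iff' (hMmeas j)] at hae
        refine ⟨{x | ¬ (x ∈ M j → max (-(f x)) 0 ≤ s)}, ?_, fun x hx hxB => ?_⟩
        · rw [ae_iff] at hae; exact hae
        · have hle : max (-(f x)) 0 ≤ s := not_not.mp hxB hx
          have hle' : -(f x) ≤ s := le_trans (le_max_left _ _) hle
          rw [gj, if_neg h]
          linarith
    obtain ⟨B, hB, hpt⟩ := hlow
    exact helper_lower μ hN hC' hB hpt
  · -- upper bound part
    have hup : ∃ B : Set X, μ B = 0 ∧ ∀ x ∈ M j, x ∉ B → f x ≤ Gj μ f (M j) := by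
      by_cases h : μ {x | x ∈ M j ∧ 0 < max (f x) 0} = 0
      · refine ⟨{x | x ∈ M j ∧ 0 < max (f x) 0}, h, fun x hx hxB => ?_⟩
        have h0 : ¬ (0 < max (f x) 0) := fun hlt => hxB ⟨hx, hlt⟩
        have hfx : f x ≤ 0 := by
          rcases le_or_gt (f x) 0 with h' | h'
          · exact h'
          · exact absurd (lt_max_of_lt_left h') h0
        have : sInf ((fun x => max (-(f x)) 0) '' (M j)) ≤ max (-(f x)) 0 :=
          csInf_le ⟨0, fun y ⟨z, _, hz⟩ => hz ▸ le_max_right _ _⟩ ⟨x, hx, rfl⟩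
        have hmx : max (-(f x)) 0 = -(f x) := max_eq_left (by linarith)
        rw [Gj, if_pos h]
        rw [hmx] at this
        linarith
      · set s := essSup (fun x => max (f x) 0) (μ.restrict (M j)) with hs
        have hbdd : Filter.IsBoundedUnder (· ≤ ·) (ae (μ.restrict (M j)))
            (fun x => max (f x) 0) := by
          apply Filter.isBoundedUnder_of_eventually_le (a := |c|)
          have h2 : ∀ᵐ x ∂(μ.restrict (M j)), ‖f x‖ ≤ c :=
            hc.filter_mono ae_restrict_le
          filter_upwards [h2] with x hx
          have h3 : f x ≤ |c| := le_trans (le_abs_self _) (le_trans hx (le_abs_self c))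
          exact max_le h3 (abs_nonneg c)
        have hae := ae_le_essSup (μ := μ.restrict (M j)) (f := fun x => max (f x) 0) hbdd
        rw [ae_restrict_iff' (hMmeas j)] at hae
        refine ⟨{x | ¬ (x ∈ M j → max (f x) 0 ≤ s)}, ?_, fun x hx hxB => ?_⟩
        · rw [ae_iff] at hae; exact hae
        · have hle : max (f x) 0 ≤ s := not_not.mp hxB hx
          have hle' : f x ≤ s := le_trans (le_max_left _ _) hle
          rw [Gj, if_neg h]
          exact hle'
    obtain ⟨B, hB, hpt⟩ := hup
    have hpt' : ∀ x ∈ M j, x ∉ B → -(Gj μ f (M j)) ≤ (fun y => -(f y)) x :=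
      fun x hx hxB => neg_le_neg (hpt x hx hxB)
    have hkey := helper_lower μ hN hC' hB hpt'
    have hset : {x : Fin N → X | x ∈ C ∧ (μ (M j)).toReal * Gj μ f (M j)
          < (1 / (N : ℝ)) * ∑ n : Fin N, Set.indicator (M j) f (x n)}
        = {x : Fin N → X | x ∈ C ∧ (μ (M j)).toReal * (-(Gj μ f (M j)))
          > (1 / (N : ℝ)) * ∑ n : Fin N, Set.indicator (M j) (fun y => -(f y)) (x n)} := by
      ext x
      simp only [Set.mem_setOf_eq]
      have hsum : ∑ n : Fin N, Set.indicator (M j) (fun y => -(f y)) (x n)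
          = -∑ n : Fin N, Set.indicator (M j) f (x n) := by
        rw [← Finset.sum_neg_distrib]
        refine Finset.sum_congr rfl fun n _ => ?_
        by_cases h : x n ∈ M j <;> simp [h]
      rw [hsum]
      constructor <;> rintro ⟨h1, h2⟩ <;> exact ⟨h1, by push_neg at *; nlinarith⟩
    rw [show {x ∈ C | (μ (M j)).toReal * Gj μ f (M j)
        < (1 / (N : ℝ)) * ∑ n : Fin N, Set.indicator (M j) f (x n)} =
      {x : Fin N → X | x ∈ C ∧ (μ (M j)).toReal * Gj μ f (M j)
        < (1 / (N : ℝ)) * ∑ n : Fin N, Set.indicator (M j) f (x n)} from rfl, hset]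
    exact hkey
end

section
/- For any essentially bounded measurable f, the essential supremum over C (with respect to μ^N) of |(1/N)·∑_{n : x_n ∈ M_j} f(x_n) − ∫_{M_j} f dμ| is at most μ(M_j)·(G_j(f) − g_j(f)), for each 1 ≤ j ≤ k. -/
open MeasureTheory

section aux
variable {X : Type*} [MeasurableSpace X] (μ : Measure X) [IsProbabilityMeasure μ]

lemma Gj_ae_bound (f : X → ℝ) {c : ℝ} (hc : ∀ᵐ t ∂μ, ‖f t‖ ≤ c)
    {Mj : Set X} (hM : MeasurableSet Mj) :
    ∀ᵐ t ∂μ, t ∈ Mj → f t ≤ Gj μ f Mj := by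
  unfold Gj
  split_ifs with h
  · have h' : ∀ᵐ t ∂μ, t ∉ {x | x ∈ Mj ∧ 0 < max (f x) 0} :=
      (measure_eq_zero_iff_ae_notMem).mp h
    filter_upwards [h'] with t ht htM
    have hft : f t ≤ 0 := by
      by_contra hpos
      exact ht ⟨htM, lt_max_iff.mpr (Or.inl (not_le.mp hpos))⟩
    have hbdd : BddBelow ((fun x => max (-(f x)) 0) '' Mj) := by
      refine ⟨0, fun y hy => ?_⟩
      obtain ⟨u, _, rfl⟩ := hy
      exact le_max_right _ _
    have hle : sInf ((fun x => max (-(f x)) 0) '' Mj) ≤ max (-(f t)) 0 :=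
      csInf_le hbdd (Set.mem_image_of_mem _ htM)
    have : max (-(f t)) 0 = -(f t) := max_eq_left (by linarith)
    linarith [hle, this ▸ hle]
  · have hb : Filter.IsBoundedUnder (· ≤ ·) (ae (μ.restrict Mj)) (fun x => max (f x) 0) := by
      refine ⟨max c 0, ?_⟩
      rw [Filter.eventually_map]
      exact (ae_restrict_of_ae hc).mono fun t ht =>
        max_le_max (le_trans (le_abs_self _) ht) le_rfl
    have h2 := ae_le_essSup hb
    have h3 := ae_imp_of_ae_restrict h2
    filter_upwards [h3] with t ht htM
    exact le_trans (le_max_left _ _) (ht htM)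

lemma gj_ae_bound (f : X → ℝ) {c : ℝ} (hc : ∀ᵐ t ∂μ, ‖f t‖ ≤ c)
    {Mj : Set X} (hM : MeasurableSet Mj) :
    ∀ᵐ t ∂μ, t ∈ Mj → gj μ f Mj ≤ f t := by
  unfold gj
  split_ifs with h
  · have h' : ∀ᵐ t ∂μ, t ∉ {x | x ∈ Mj ∧ 0 < max (-(f x)) 0} :=
      (measure_eq_zero_iff_ae_notMem).mp h
    filter_upwards [h'] with t ht htM
    have hft : 0 ≤ f t := by
      by_contra hneg
      exact ht ⟨htM, lt_max_iff.mpr (Or.inl (by linarith [not_le.mp hneg]))⟩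
    have hbdd : BddBelow ((fun x => max (f x) 0) '' Mj) := by
      refine ⟨0, fun y hy => ?_⟩
      obtain ⟨u, _, rfl⟩ := hy
      exact le_max_right _ _
    have hle : sInf ((fun x => max (f x) 0) '' Mj) ≤ max (f t) 0 :=
      csInf_le hbdd (Set.mem_image_of_mem _ htM)
    have : max (f t) 0 = f t := max_eq_left hft
    linarith [this ▸ hle]
  · have hb : Filter.IsBoundedUnder (· ≤ ·) (ae (μ.restrict Mj)) (fun x => max (-(f x)) 0) := by
      refine ⟨max c 0, ?_⟩
      rw [Filter.eventually_map]
      exact (ae_restrict_of_ae hc).mono fun t ht =>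
        max_le_max (le_trans (neg_le_abs _) ht) le_rfl
    have h2 := ae_le_essSup hb
    have h3 := ae_imp_of_ae_restrict h2
    filter_upwards [h3] with t ht htM
    have := ht htM
    have h4 : -(f t) ≤ max (-(f t)) 0 := le_max_left _ _
    linarith

end aux


/-- For f ∈ L^∞, a.e. on the set C of (𝓜, μ)-uniform tuples (w.r.t. μ^N),
the error of the partial average over points in M_j against ∫_{M_j} f dμ is at most
μ(M_j)·(G_j(f) − g_j(f)), for each j. -/
theorem partial_error_le_local_spread
    {X : Type*} [MeasurableSpace X] (μ : Measure X) [IsProbabilityMeasure μ]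
    (k : ℕ) (hk : 0 < k) (M : Fin k → Set X)
    (hMmeas : ∀ j, MeasurableSet (M j))
    (hMdisj : Pairwise (Function.onFun Disjoint M))
    (hMcover : ⋃ j, M j = Set.univ)
    (N : ℕ) (hN : 0 < N)
    (C : Set (Fin N → X))
    (hC : C = {x : Fin N → X | ∀ j : Fin k,
      ∑ n : Fin N, Set.indicator (M j) (fun _ => (1 : ℝ)) (x n) = (μ (M j)).toReal * N})
    (f : X → ℝ) (hf : MemLp f ⊤ μ) :
    ∀ j : Fin k,
      ∀ᵐ x ∂((Measure.pi (fun _ : Fin N => μ)).restrict C),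
        |(1 / (N : ℝ)) * ∑ n : Fin N, Set.indicator (M j) f (x n)
            - ∫ t in M j, f t ∂μ|
          ≤ (μ (M j)).toReal * (Gj μ f (M j) - gj μ f (M j)) := by
  intro j
  obtain ⟨c, hc⟩ : ∃ c : ℝ, ∀ᵐ t ∂μ, ‖f t‖ ≤ c := by
    have h := hf.2
    rw [eLpNorm_exponent_top, eLpNormEssSup_lt_top_iff_isBoundedUnder] at h
    obtain ⟨c, hc⟩ := h
    rw [Filter.eventually_map] at hc
    exact ⟨c, hc.mono fun t ht => by exact_mod_cast ht⟩
  set G := Gj μ f (M j) with hGdef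
  set g := gj μ f (M j) with hgdef
  set m := (μ (M j)).toReal with hm
  have hGb := Gj_ae_bound μ f hc (hMmeas j)
  have hgb := gj_ae_bound μ f hc (hMmeas j)
  -- integral bounds
  have hint : Integrable f (μ.restrict (M j)) := (hf.integrable le_top).restrict
  have hm0 : 0 ≤ m := ENNReal.toReal_nonneg
  have hμuniv : (μ.restrict (M j)) Set.univ = μ (M j) := by
    rw [Measure.restrict_apply_univ]
  have hIub : ∫ t in M j, f t ∂μ ≤ m * G := by
    have hae : ∀ᵐ t ∂μ.restrict (M j), f t ≤ G :=
      (ae_restrict_iff' (hMmeas j)).mpr hGb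
    calc ∫ t in M j, f t ∂μ ≤ ∫ _ in M j, G ∂μ := integral_mono_ae hint (integrable_const _) hae
      _ = m * G := by rw [integral_const, measureReal_def, hμuniv, smul_eq_mul]
  have hIlb : m * g ≤ ∫ t in M j, f t ∂μ := by
    have hae : ∀ᵐ t ∂μ.restrict (M j), g ≤ f t :=
      (ae_restrict_iff' (hMmeas j)).mpr hgb
    calc m * g = ∫ _ in M j, g ∂μ := by rw [integral_const, measureReal_def, hμuniv, smul_eq_mul]
      _ ≤ ∫ t in M j, f t ∂μ := integral_mono_ae (integrable_const _) hint hae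
  -- bad set
  have hae : ∀ᵐ t ∂μ, t ∈ M j → g ≤ f t ∧ f t ≤ G := by
    filter_upwards [hGb, hgb] with t h1 h2 ht
    exact ⟨h2 ht, h1 ht⟩
  have hbad : μ {t | ¬(t ∈ M j → g ≤ f t ∧ f t ≤ G)} = 0 := ae_iff.mp hae
  obtain ⟨s, hsup, hsm, hs0⟩ := exists_measurable_superset_of_null hbad
  have hpi : Measure.pi (fun _ : Fin N => μ) {x | ∃ n, x n ∈ s} = 0 := by
    have : {x : Fin N → X | ∃ n, x n ∈ s} = ⋃ n, Function.eval n ⁻¹' s := by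
      ext x; simp [Function.eval]
    rw [this]
    exact measure_iUnion_null fun n => Measure.pi_eval_preimage_null _ hs0
  have hCmeas : MeasurableSet C := by
    rw [hC]
    have hmeas : ∀ i : Fin k, Measurable fun x : Fin N → X =>
        ∑ n : Fin N, Set.indicator (M i) (fun _ => (1 : ℝ)) (x n) :=
      fun i => Finset.measurable_sum _ fun n _ =>
        (measurable_const.indicator (hMmeas i)).comp (measurable_pi_apply n)
    have : {x : Fin N → X | ∀ i : Fin k,
        ∑ n : Fin N, Set.indicator (M i) (fun _ => (1 : ℝ)) (x n) = (μ (M i)).toReal * N}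
        = ⋂ i : Fin k, (fun x : Fin N → X =>
          ∑ n : Fin N, Set.indicator (M i) (fun _ => (1 : ℝ)) (x n)) ⁻¹' {(μ (M i)).toReal * N} := by
      ext x; simp [Set.mem_iInter]
    rw [this]
    exact MeasurableSet.iInter fun i => (hmeas i) (measurableSet_singleton _)
  have h1 : ∀ᵐ x ∂((Measure.pi (fun _ : Fin N => μ)).restrict C), ∀ n, x n ∉ s := by
    apply ae_restrict_of_ae
    have := (measure_eq_zero_iff_ae_notMem).mp hpi
    filter_upwards [this] with x hx n hn
    exact hx ⟨n, hn⟩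
  have h2 : ∀ᵐ x ∂((Measure.pi (fun _ : Fin N => μ)).restrict C), x ∈ C :=
    ae_restrict_mem hCmeas
  filter_upwards [h1, h2] with x hxs hxC
  have hgood : ∀ n : Fin N, x n ∈ M j → g ≤ f (x n) ∧ f (x n) ≤ G := by
    intro n hn
    by_contra hcon
    exact hxs n (hsup (fun himp => hcon (himp hn)))
  have hxCeq : ∑ n : Fin N, Set.indicator (M j) (fun _ => (1 : ℝ)) (x n) = m * N := by
    rw [hC] at hxC
    exact hxC j
  set S := ∑ n : Fin N, Set.indicator (M j) f (x n) with hS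
  have hSub : S ≤ G * (m * N) := by
    calc S ≤ ∑ n : Fin N, G * Set.indicator (M j) (fun _ => (1 : ℝ)) (x n) := by
          apply Finset.sum_le_sum
          intro n _
          by_cases h : x n ∈ M j
          · rw [Set.indicator_of_mem h, Set.indicator_of_mem h, mul_one]
            exact (hgood n h).2
          · rw [Set.indicator_of_notMem h, Set.indicator_of_notMem h, mul_zero]
      _ = G * (m * N) := by rw [← Finset.mul_sum, hxCeq]
  have hSlb : g * (m * N) ≤ S := by
    calc g * (m * N) = ∑ n : Fin N, g * Set.indicator (M j) (fun _ => (1 : ℝ)) (x n) := by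
          rw [← Finset.mul_sum, hxCeq]
      _ ≤ S := by
          apply Finset.sum_le_sum
          intro n _
          by_cases h : x n ∈ M j
          · rw [Set.indicator_of_mem h, Set.indicator_of_mem h, mul_one]
            exact (hgood n h).1
          · rw [Set.indicator_of_notMem h, Set.indicator_of_notMem h, mul_zero]
  have hNpos : (0 : ℝ) < N := by exact_mod_cast hN
  have hub : (1 / (N : ℝ)) * S ≤ m * G := by
    rw [div_mul_eq_mul_div, one_mul, div_le_iff₀ hNpos]
    calc S ≤ G * (m * N) := hSub
      _ = m * G * N := by ring
  have hlb : m * g ≤ (1 / (N : ℝ)) * S := by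
    rw [div_mul_eq_mul_div, one_mul, le_div_iff₀ hNpos]
    calc m * g * N = g * (m * N) := by ring
      _ ≤ S := hSlb
  rw [abs_sub_le_iff]
  constructor <;> linarith
end

section
/- For any essentially bounded measurable f, the essential supremum over the set C of (𝓜, μ)-uniform N-tuples of |(1/N)·∑_{n=1}^N f(x_n) − ∫_X f dμ| is at most ∑_{j=1}^k μ(M_j)·(G_j(f) − g_j(f)). -/
open MeasureTheory

/-- Almost every point of `M` has `f` between `gj` and `Gj`. -/
lemma aux_mem_Icc {X : Type*} [MeasurableSpace X] (μ : Measure X)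
    (f : X → ℝ) (hf : MemLp f ⊤ μ) {M : Set X} (hM : MeasurableSet M) :
    ∀ᵐ t ∂μ, t ∈ M → (gj μ f M ≤ f t ∧ f t ≤ Gj μ f M) := by
  obtain ⟨Cb, hCb⟩ : ∃ Cb : ℝ, ∀ᵐ t ∂μ, |f t| ≤ Cb := by
    refine ⟨(eLpNormEssSup f μ).toReal, ?_⟩
    have hfin : eLpNormEssSup f μ ≠ ⊤ := by
      simpa [eLpNorm_exponent_top] using hf.2.ne
    filter_upwards [ae_le_eLpNormEssSup (f := f) (μ := μ)] with t ht
    have := ENNReal.toReal_mono hfin ht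
    simpa [Real.norm_eq_abs] using this
  have hupper : ∀ᵐ t ∂μ, t ∈ M → f t ≤ Gj μ f M := by
    unfold Gj
    split_ifs with h
    · have h0 : ∀ᵐ t ∂μ, t ∉ {x | x ∈ M ∧ 0 < max (f x) 0} :=
        measure_eq_zero_iff_ae_notMem.mp h
      filter_upwards [h0] with t ht htM
      have hft : f t ≤ 0 := by
        by_contra hpos
        push_neg at hpos
        exact ht ⟨htM, lt_max_iff.2 (Or.inl hpos)⟩
      have hbdd : BddBelow ((fun x => max (-(f x)) 0) '' M) :=
        ⟨0, by rintro y ⟨x, -, rfl⟩; exact le_max_right _ _⟩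
      have hmem : max (-(f t)) 0 ∈ (fun x => max (-(f x)) 0) '' M := ⟨t, htM, rfl⟩
      have h1 := csInf_le hbdd hmem
      have hmax : max (-(f t)) 0 = -(f t) := max_eq_left (by linarith)
      rw [hmax] at h1
      linarith
    · rw [← ae_restrict_iff' hM]
      have hb : Filter.IsBoundedUnder (· ≤ ·) (ae (μ.restrict M))
          (fun t => max (f t) 0) := by
        refine ⟨max Cb 0, ?_⟩
        rw [Filter.eventually_map]
        filter_upwards [ae_restrict_of_ae hCb] with t ht
        exact max_le_max (le_trans (le_abs_self _) ht) le_rfl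
      filter_upwards [ae_le_essSup hb] with t ht
      exact le_trans (le_max_left _ _) ht
  have hlower : ∀ᵐ t ∂μ, t ∈ M → gj μ f M ≤ f t := by
    unfold gj
    split_ifs with h
    · have h0 : ∀ᵐ t ∂μ, t ∉ {x | x ∈ M ∧ 0 < max (-(f x)) 0} :=
        measure_eq_zero_iff_ae_notMem.mp h
      filter_upwards [h0] with t ht htM
      have hft : 0 ≤ f t := by
        by_contra hneg
        push_neg at hneg
        exact ht ⟨htM, lt_max_iff.2 (Or.inl (by linarith))⟩
      have hbdd : BddBelow ((fun x => max (f x) 0) '' M) :=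
        ⟨0, by rintro y ⟨x, -, rfl⟩; exact le_max_right _ _⟩
      have h1 := csInf_le hbdd (⟨t, htM, rfl⟩ :
        max (f t) 0 ∈ (fun x => max (f x) 0) '' M)
      have hmax : max (f t) 0 = f t := max_eq_left hft
      rw [hmax] at h1
      linarith
    · rw [← ae_restrict_iff' hM]
      have hb : Filter.IsBoundedUnder (· ≤ ·) (ae (μ.restrict M))
          (fun t => max (-(f t)) 0) := by
        refine ⟨max Cb 0, ?_⟩
        rw [Filter.eventually_map]
        filter_upwards [ae_restrict_of_ae hCb] with t ht
        exact max_le_max (le_trans (neg_le_abs _) ht) le_rfl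
      filter_upwards [ae_le_essSup hb] with t ht
      have h2 : -(f t) ≤ essSup (fun t => max (-(f t)) 0) (μ.restrict M) :=
        le_trans (le_max_left _ _) ht
      linarith
  filter_upwards [hlower, hupper] with t h1 h2 htM
  exact ⟨h1 htM, h2 htM⟩

/-- An integral of a function a.e. between two constants lies between the
corresponding multiples of the measure. -/
lemma aux_integral_between {X : Type*} [MeasurableSpace X] {μ : Measure X}
    [IsFiniteMeasure μ] {f : X → ℝ} (hInt : Integrable f μ) {M : Set X} (g G : ℝ)
    (hae : ∀ᵐ t ∂μ.restrict M, g ≤ f t ∧ f t ≤ G) :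
    (μ M).toReal * g ≤ ∫ t in M, f t ∂μ ∧ ∫ t in M, f t ∂μ ≤ (μ M).toReal * G := by
  constructor
  · have h := integral_mono_ae (integrable_const g) hInt.integrableOn
      (hae.mono fun t ht => ht.1)
    simpa [smul_eq_mul, measureReal_def] using h
  · have h := integral_mono_ae hInt.integrableOn (integrable_const G)
      (hae.mono fun t ht => ht.2)
    simpa [smul_eq_mul, measureReal_def] using h

/-- Corollary 2 of the paper: For f ∈ L^∞, the essential supremum over the
set C of (𝓜, μ)-uniform tuples of the integration error is at most
∑_j μ(M_j)·(G_j(f) − g_j(f)), stated as an a.e. bound. -/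
theorem quasiMonteCarlo_error_le_sum_local_spread
    {X : Type*} [MeasurableSpace X] (μ : Measure X) [IsProbabilityMeasure μ]
    (k : ℕ) (hk : 0 < k) (M : Fin k → Set X)
    (hMmeas : ∀ j, MeasurableSet (M j))
    (hMdisj : Pairwise (Function.onFun Disjoint M))
    (hMcover : ⋃ j, M j = Set.univ)
    (N : ℕ) (hN : 0 < N)
    (C : Set (Fin N → X))
    (hC : C = {x : Fin N → X | ∀ j : Fin k,
      ∑ n : Fin N, Set.indicator (M j) (fun _ => (1 : ℝ)) (x n) = (μ (M j)).toReal * N})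
    (f : X → ℝ) (hf : MemLp f ⊤ μ) :
    ∀ᵐ x ∂((Measure.pi (fun _ : Fin N => μ)).restrict C),
      |(1 / (N : ℝ)) * ∑ n : Fin N, f (x n) - ∫ t, f t ∂μ|
        ≤ ∑ j : Fin k, (μ (M j)).toReal * (Gj μ f (M j) - gj μ f (M j)) := by
  have hInt : Integrable f μ := hf.integrable le_top
  have hNpos : (0 : ℝ) < N := by exact_mod_cast hN
  -- measurability of C
  have hCmeas : MeasurableSet C := by
    rw [hC]
    have heq : {x : Fin N → X | ∀ j : Fin k,
        ∑ n : Fin N, Set.indicator (M j) (fun _ => (1 : ℝ)) (x n)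
          = (μ (M j)).toReal * N}
        = ⋂ j : Fin k, {x : Fin N → X |
            ∑ n : Fin N, Set.indicator (M j) (fun _ => (1 : ℝ)) (x n)
              = (μ (M j)).toReal * N} := by
      ext y; simp [Set.mem_iInter]
    rw [heq]
    refine MeasurableSet.iInter fun j => ?_
    have hm : Measurable fun x : Fin N → X =>
        ∑ n : Fin N, Set.indicator (M j) (fun _ => (1 : ℝ)) (x n) :=
      Finset.measurable_sum _ fun n _ =>
        (measurable_const.indicator (hMmeas j)).comp (measurable_pi_apply n)
    exact hm (measurableSet_singleton _)
  -- a.e. bounds at every coordinate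
  have hfae : ∀ᵐ t ∂μ, ∀ j : Fin k, t ∈ M j →
      (gj μ f (M j) ≤ f t ∧ f t ≤ Gj μ f (M j)) :=
    ae_all_iff.2 fun j => aux_mem_Icc μ f hf (hMmeas j)
  have hπ : ∀ᵐ x ∂(Measure.pi fun _ : Fin N => μ), ∀ n : Fin N, ∀ j : Fin k,
      x n ∈ M j → (gj μ f (M j) ≤ f (x n) ∧ f (x n) ≤ Gj μ f (M j)) :=
    ae_all_iff.2 fun n =>
      (Measure.tendsto_eval_ae_ae (μ := fun _ : Fin N => μ) (i := n)).eventually hfae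
  -- partition decomposition of f
  have hpart : ∀ t : X, ∑ j : Fin k, (M j).indicator f t = f t := by
    intro t
    obtain ⟨j0, hj0⟩ : ∃ j0, t ∈ M j0 :=
      Set.mem_iUnion.mp (hMcover ▸ Set.mem_univ t)
    rw [Finset.sum_eq_single j0]
    · exact Set.indicator_of_mem hj0 f
    · intro j _ hjne
      exact Set.indicator_of_notMem
        (fun hmem => (Set.disjoint_left.mp (hMdisj hjne) hmem) hj0) f
    · intro habs; exact absurd (Finset.mem_univ j0) habs
  have hint : ∫ t, f t ∂μ = ∑ j : Fin k, ∫ t in M j, f t ∂μ := by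
    rw [← integral_iUnion_fintype hMmeas hMdisj fun j => hInt.integrableOn,
      hMcover, setIntegral_univ]
  -- integral bounds per piece
  have hintj : ∀ j : Fin k,
      (μ (M j)).toReal * gj μ f (M j) ≤ ∫ t in M j, f t ∂μ ∧
        ∫ t in M j, f t ∂μ ≤ (μ (M j)).toReal * Gj μ f (M j) := fun j =>
    aux_integral_between hInt _ _
      ((ae_restrict_iff' (hMmeas j)).2 (aux_mem_Icc μ f hf (hMmeas j)))
  filter_upwards [ae_restrict_of_ae hπ, ae_restrict_mem hCmeas] with x hx hxC
  rw [hC] at hxC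
  have hsum : ∑ n : Fin N, f (x n)
      = ∑ j : Fin k, ∑ n : Fin N, (M j).indicator f (x n) := by
    calc ∑ n : Fin N, f (x n)
        = ∑ n : Fin N, ∑ j : Fin k, (M j).indicator f (x n) :=
          Finset.sum_congr rfl fun n _ => (hpart (x n)).symm
      _ = ∑ j : Fin k, ∑ n : Fin N, (M j).indicator f (x n) := Finset.sum_comm
  have key : |(1 / (N : ℝ)) * ∑ n : Fin N, f (x n) - ∫ t, f t ∂μ|
      ≤ ∑ j : Fin k, |(1 / (N : ℝ)) * ∑ n : Fin N, (M j).indicator f (x n)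
          - ∫ t in M j, f t ∂μ| := by
    rw [hsum, hint, Finset.mul_sum, ← Finset.sum_sub_distrib]
    exact Finset.abs_sum_le_sum_abs _ _
  refine le_trans key (Finset.sum_le_sum fun j _ => ?_)
  have hcnt : ∑ n : Fin N, Set.indicator (M j) (fun _ => (1 : ℝ)) (x n)
      = (μ (M j)).toReal * N := hxC j
  have hub : ∑ n : Fin N, (M j).indicator f (x n)
      ≤ Gj μ f (M j) * ((μ (M j)).toReal * N) := by
    calc ∑ n : Fin N, (M j).indicator f (x n)
        ≤ ∑ n : Fin N, Gj μ f (M j)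
            * Set.indicator (M j) (fun _ => (1 : ℝ)) (x n) := by
          refine Finset.sum_le_sum fun n _ => ?_
          by_cases hn : x n ∈ M j
          · rw [Set.indicator_of_mem hn, Set.indicator_of_mem hn, mul_one]
            exact (hx n j hn).2
          · rw [Set.indicator_of_notMem hn, Set.indicator_of_notMem hn, mul_zero]
      _ = Gj μ f (M j) * ((μ (M j)).toReal * N) := by
          rw [← Finset.mul_sum, hcnt]
  have hlb : gj μ f (M j) * ((μ (M j)).toReal * N)
      ≤ ∑ n : Fin N, (M j).indicator f (x n) := by
    calc gj μ f (M j) * ((μ (M j)).toReal * N)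
        = ∑ n : Fin N, gj μ f (M j)
            * Set.indicator (M j) (fun _ => (1 : ℝ)) (x n) := by
          rw [← Finset.mul_sum, hcnt]
      _ ≤ ∑ n : Fin N, (M j).indicator f (x n) := by
          refine Finset.sum_le_sum fun n _ => ?_
          by_cases hn : x n ∈ M j
          · rw [Set.indicator_of_mem hn, Set.indicator_of_mem hn, mul_one]
            exact (hx n j hn).1
          · rw [Set.indicator_of_notMem hn, Set.indicator_of_notMem hn, mul_zero]
  have hNne : (N : ℝ) ≠ 0 := ne_of_gt hNpos
  have h1 : (1 / (N : ℝ)) * ∑ n : Fin N, (M j).indicator f (x n)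
      ≤ (μ (M j)).toReal * Gj μ f (M j) := by
    have := mul_le_mul_of_nonneg_left hub (by positivity :
      (0 : ℝ) ≤ 1 / (N : ℝ))
    calc (1 / (N : ℝ)) * ∑ n : Fin N, (M j).indicator f (x n)
        ≤ (1 / (N : ℝ)) * (Gj μ f (M j) * ((μ (M j)).toReal * N)) := this
      _ = (μ (M j)).toReal * Gj μ f (M j) := by field_simp
  have h2 : (μ (M j)).toReal * gj μ f (M j)
      ≤ (1 / (N : ℝ)) * ∑ n : Fin N, (M j).indicator f (x n) := by
    have := mul_le_mul_of_nonneg_left hlb (by positivity :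
      (0 : ℝ) ≤ 1 / (N : ℝ))
    calc (μ (M j)).toReal * gj μ f (M j)
        = (1 / (N : ℝ)) * (gj μ f (M j) * ((μ (M j)).toReal * N)) := by
          field_simp
      _ ≤ (1 / (N : ℝ)) * ∑ n : Fin N, (M j).indicator f (x n) := this
  obtain ⟨hi1, hi2⟩ := hintj j
  rw [mul_sub, abs_sub_le_iff]
  constructor <;> linarith
end
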